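/- Let q = p^f ≥ 3 be an odd prime power, F_q^× = {x_1 = 1, x_2, …, x_{q-1}}, and ψ a nontrivial multiplicative character of F_q. Then det[ψ(x_j - x_i)]_{2≤i,j≤q-1} = -((1 + ψ(-1))/q²)·G(ψ)^{q-1}. In particular, for ψ = φ the quadratic character, this matrix is singular if and only if q ≡ 3 (mod 4), and for q ≡ 1 (mod 4) its determinant equals -2 q^{(q-5)/2}. -/

import Mathlib

set_option linter.unusedSectionVars false
set_option linter.unusedVariables false
set_option maxHeartbeats 1000000

open Finset

namespace DetDqAux

variable {F : Type*} [Field F] [Fintype F] [DecidableEq F]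

lemma card_ne_zero_C : (Fintype.card F : ℂ) ≠ 0 :=
  Nat.cast_ne_zero.mpr Fintype.card_ne_zero

lemma sum_shift (ψ : MulChar F ℂ) (hψ : ψ ≠ 1) (c : F) : ∑ y : F, ψ (y - c) = 0 :=
  (Fintype.sum_equiv (Equiv.subRight c) (fun y => ψ (y - c)) (fun y => ψ y)
    (fun y => rfl)).trans (MulChar.sum_eq_zero_of_ne_one hψ)

lemma sum_shift_left (ψ : MulChar F ℂ) (hψ : ψ ≠ 1) (c : F) : ∑ y : F, ψ (c - y) = 0 :=
  (Fintype.sum_equiv (Equiv.subLeft c) (fun y => ψ (c - y)) (fun y => ψ y)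
    (fun y => rfl)).trans (MulChar.sum_eq_zero_of_ne_one hψ)

lemma mc_inv_ne_one (ψ : MulChar F ℂ) (hψ : ψ ≠ 1) : ψ⁻¹ ≠ 1 :=
  fun h => hψ (inv_eq_one.mp h)

lemma mc_mul_inv_self (ψ : MulChar F ℂ) {c : F} (hc : c ≠ 0) : ψ c * ψ⁻¹ c = 1 := by
  rw [MulChar.inv_apply' , ← map_mul, mul_inv_cancel₀ hc, ψ.map_one]

lemma jacobi_aux (ψ : MulChar F ℂ) (hψ : ψ ≠ 1) :
    ∑ z : F, ψ z * ψ⁻¹ (z - 1) = -1 := by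
  classical
  have hsplit : ∑ z : F, ψ z * ψ⁻¹ (z - 1)
      = ∑ z ∈ (univ \ {0, 1} : Finset F), ψ z * ψ⁻¹ (z - 1) := by
    rw [Finset.sum_sdiff_eq_sub (subset_univ _)]
    rw [Finset.sum_pair (show (0:F) ≠ 1 from zero_ne_one)]
    simp [MulChar.map_zero]
  rw [hsplit]
  have hmem : ∀ z : F, z ∈ (univ \ {0,1} : Finset F) ↔ z ≠ 0 ∧ z ≠ 1 := by
    intro z; simp [mem_sdiff]
  have key : ∀ z ∈ (univ \ {0,1} : Finset F), z * (z - 1)⁻¹ ∈ (univ \ {0,1} : Finset F) := by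
    intro z hz
    obtain ⟨hz0, hz1⟩ := (hmem z).mp hz
    have hz1' : z - 1 ≠ 0 := sub_ne_zero.mpr hz1
    refine (hmem _).mpr ⟨mul_ne_zero hz0 (inv_ne_zero hz1'), ?_⟩
    intro h
    have h2 : z = z - 1 := by field_simp at h; linear_combination h
    exact one_ne_zero (sub_eq_self.mp h2.symm)
  have hinvo : ∀ z ∈ (univ \ {0,1} : Finset F),
      (z * (z - 1)⁻¹) * ((z * (z - 1)⁻¹) - 1)⁻¹ = z := by
    intro z hz
    obtain ⟨hz0, hz1⟩ := (hmem z).mp hz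
    have hz1' : z - 1 ≠ 0 := sub_ne_zero.mpr hz1
    have h2 : z * (z - 1)⁻¹ - 1 = (z - 1)⁻¹ := by field_simp; ring
    rw [h2, inv_inv, mul_assoc, inv_mul_cancel₀ hz1', mul_one]
  have hstep : ∑ z ∈ (univ \ {0,1} : Finset F), ψ z * ψ⁻¹ (z - 1)
      = ∑ z ∈ (univ \ {0,1} : Finset F), ψ z := by
    have h3 : ∀ z ∈ (univ \ {0,1} : Finset F), ψ z * ψ⁻¹ (z - 1) = ψ (z * (z-1)⁻¹) := by
      intro z hz
      rw [MulChar.inv_apply', map_mul]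
    rw [Finset.sum_congr rfl h3]
    exact Finset.sum_nbij' (fun z => z * (z-1)⁻¹) (fun z => z * (z-1)⁻¹)
      key key hinvo hinvo (fun z hz => rfl)
  rw [hstep, Finset.sum_sdiff_eq_sub (subset_univ _),
    Finset.sum_pair (show (0:F) ≠ 1 from zero_ne_one),
    MulChar.sum_eq_zero_of_ne_one hψ]
  simp [MulChar.map_zero]

lemma sum_self (ψ : MulChar F ℂ) (hψ : ψ ≠ 1) :
    ∑ y : F, ψ y * ψ⁻¹ y = (Fintype.card F : ℂ) - 1 := by
  have h : ∀ y : F, ψ y * ψ⁻¹ y = (1:ℂ) - (if y = 0 then 1 else 0) := by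
    intro y
    by_cases hy : y = 0
    · simp [hy, MulChar.map_zero]
    · rw [mc_mul_inv_self ψ hy, if_neg hy, sub_zero]
  rw [Finset.sum_congr rfl (fun y _ => h y), Finset.sum_sub_distrib,
    Finset.sum_const, Finset.sum_ite_eq' univ (0:F) (fun _ => (1:ℂ))]
  simp

lemma sum_jac (ψ : MulChar F ℂ) (hψ : ψ ≠ 1) {c : F} (hc : c ≠ 0) :
    ∑ y : F, ψ y * ψ⁻¹ (y - c) = -1 := by
  have h := Fintype.sum_equiv (Equiv.mulLeft₀ c hc)
    (fun z => ψ (c * z) * ψ⁻¹ (c * z - c)) (fun y => ψ y * ψ⁻¹ (y - c)) (fun z => rfl)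
  rw [← h]
  have h2 : ∀ z : F, ψ (c * z) * ψ⁻¹ (c * z - c)
      = (ψ c * ψ⁻¹ c) * (ψ z * ψ⁻¹ (z - 1)) := by
    intro z
    rw [show c * z - c = c * (z - 1) by ring, map_mul, map_mul]
    ring
  rw [Finset.sum_congr rfl (fun z _ => h2 z)]
  rw [← Finset.mul_sum, mc_mul_inv_self ψ hc, one_mul, jacobi_aux ψ hψ]

lemma sum_jac2 (ψ : MulChar F ℂ) (hψ : ψ ≠ 1) (x z : F) :
    ∑ y : F, ψ (y - x) * ψ⁻¹ (y - z) = if x = z then (Fintype.card F : ℂ) - 1 else -1 := by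
  have h := Fintype.sum_equiv (Equiv.addRight x)
    (fun u => ψ u * ψ⁻¹ (u - (z - x))) (fun y => ψ (y - x) * ψ⁻¹ (y - z))
    (fun u => by
      simp only [Equiv.coe_addRight, add_sub_cancel_right]
      rw [show u + x - z = u - (z - x) by ring])
  rw [← h]
  by_cases hxz : x = z
  · rw [if_pos hxz, hxz, sub_self]
    simpa using sum_self ψ hψ
  · rw [if_neg hxz]
    exact sum_jac ψ hψ (sub_ne_zero.mpr (Ne.symm hxz))

noncomputable def Ap (ψ : MulChar F ℂ) : Matrix F F ℂ :=
  Matrix.of fun x y => ψ (y - x) + (Fintype.card F : ℂ)⁻¹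

noncomputable def Nmat (ψ : MulChar F ℂ) : Matrix F F ℂ :=
  Matrix.of fun x y => (Fintype.card F : ℂ)⁻¹ * (1 + ψ⁻¹ (x - y))

noncomputable def Bmat (ψ : MulChar F ℂ) : Matrix F F ℂ :=
  Matrix.of fun x y =>
    if x = 0 then (if y = 0 then 1 else 0)
    else if x = 1 then (if y = 1 then 1 else 0) else ψ (y - x)

noncomputable def V3 : Matrix F (Fin 3) ℂ :=
  Matrix.of fun x => ![if x = 0 then 1 else 0, if x = 1 then 1 else 0, 1]

noncomputable def W3 (ψ : MulChar F ℂ) : Matrix (Fin 3) F ℂ :=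
  Matrix.of ![fun y => (if y = 0 then 1 else 0) - ψ y,
    fun y => (if y = 1 then 1 else 0) - ψ (y - 1),
    fun _ => -(Fintype.card F : ℂ)⁻¹]

noncomputable def NVmat (ψ : MulChar F ℂ) : Matrix F (Fin 3) ℂ :=
  Matrix.of fun y => ![(Fintype.card F : ℂ)⁻¹ * (1 + ψ⁻¹ y),
    (Fintype.card F : ℂ)⁻¹ * (1 + ψ⁻¹ (y - 1)), 1]

noncomputable def Kmat (ψ : MulChar F ℂ) : Matrix (Fin 3) (Fin 3) ℂ :=
  Matrix.of ![![2 * (Fintype.card F : ℂ)⁻¹, (2 + ψ (-1)) * (Fintype.card F : ℂ)⁻¹, 1],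
    ![3 * (Fintype.card F : ℂ)⁻¹, 2 * (Fintype.card F : ℂ)⁻¹, 1],
    ![-(Fintype.card F : ℂ)⁻¹, -(Fintype.card F : ℂ)⁻¹, 0]]

lemma ApN (ψ : MulChar F ℂ) (hψ : ψ ≠ 1) : Ap ψ * Nmat ψ = 1 := by
  ext x z
  rw [Matrix.mul_apply]
  set Q : ℂ := (Fintype.card F : ℂ) with hQdef
  have hQ : Q ≠ 0 := card_ne_zero_C
  have hexp : ∀ y : F, (Ap ψ) x y * (Nmat ψ) y z
      = Q⁻¹ * ψ (y - x) + Q⁻¹ * (ψ (y - x) * ψ⁻¹ (y - z))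
        + Q⁻¹ * Q⁻¹ + Q⁻¹ * Q⁻¹ * ψ⁻¹ (y - z) := by
    intro y; simp only [Ap, Nmat, Matrix.of_apply]; ring
  rw [Finset.sum_congr rfl (fun y _ => hexp y)]
  simp only [Finset.sum_add_distrib, ← Finset.mul_sum]
  rw [sum_shift ψ hψ x, sum_jac2 ψ hψ x z, sum_shift ψ⁻¹ (mc_inv_ne_one ψ hψ) z,
    Finset.sum_const, card_univ, Matrix.one_apply]
  by_cases hxz : x = z
  · rw [if_pos hxz, if_pos hxz]
    simp only [nsmul_eq_mul, ← hQdef]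
    linear_combination (1 + Q⁻¹) * inv_mul_cancel₀ hQ
  · rw [if_neg hxz, if_neg hxz]
    simp only [nsmul_eq_mul, ← hQdef]
    linear_combination Q⁻¹ * inv_mul_cancel₀ hQ

lemma B_eq (ψ : MulChar F ℂ) : Bmat ψ = Ap ψ + V3 * W3 ψ := by
  ext x y
  simp only [Matrix.add_apply, Matrix.mul_apply, Bmat, Ap, V3, W3, Matrix.of_apply,
    Fin.sum_univ_three, Matrix.cons_val_zero, Matrix.cons_val_one, Matrix.head_cons,
    Matrix.cons_val_two, Matrix.tail_cons]
  by_cases hx0 : x = 0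
  · subst hx0
    simp only [eq_self_iff_true, if_true, if_neg (zero_ne_one (α := F))]
    rw [sub_zero]
    ring
  · rw [if_neg hx0]
    by_cases hx1 : x = 1
    · subst hx1
      simp only [eq_self_iff_true, if_true, if_neg hx0]
      ring
    · rw [if_neg hx1, if_neg hx0, if_neg hx1]
      ring

lemma NV3 (ψ : MulChar F ℂ) (hψ : ψ ≠ 1) : Nmat ψ * V3 = NVmat ψ := by
  have h0 : ∀ y : F, ((Nmat ψ * V3 : Matrix F (Fin 3) ℂ)) y 0 = (NVmat ψ) y 0 := by
    intro y
    erw [Matrix.mul_apply]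
    simp only [Nmat, V3, NVmat, Matrix.of_apply, Matrix.cons_val_zero, mul_ite, mul_one,
      mul_zero]
    rw [Finset.sum_ite_eq' univ (0:F)]
    simp
  have h1 : ∀ y : F, ((Nmat ψ * V3 : Matrix F (Fin 3) ℂ)) y 1 = (NVmat ψ) y 1 := by
    intro y
    erw [Matrix.mul_apply]
    simp only [Nmat, V3, NVmat, Matrix.of_apply, Matrix.cons_val_one, Matrix.head_cons,
      Matrix.cons_val_zero, mul_ite, mul_one, mul_zero]
    rw [Finset.sum_ite_eq' univ (1:F)]
    simp
  have h2 : ∀ y : F, ((Nmat ψ * V3 : Matrix F (Fin 3) ℂ)) y 2 = (NVmat ψ) y 2 := by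
    intro y
    erw [Matrix.mul_apply]
    simp only [Nmat, V3, NVmat, Matrix.of_apply, Matrix.cons_val_two, Matrix.tail_cons,
      Matrix.head_cons, mul_one]
    rw [← Finset.mul_sum, Finset.sum_add_distrib, Finset.sum_const, card_univ,
      sum_shift_left ψ⁻¹ (mc_inv_ne_one ψ hψ) y]
    simp only [nsmul_eq_mul, mul_one, add_zero]
    exact inv_mul_cancel₀ card_ne_zero_C
  ext y j
  fin_cases j
  · exact h0 y
  · exact h1 y
  · exact h2 y

lemma K_eq (ψ : MulChar F ℂ) (hψ : ψ ≠ 1) :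
    (1 : Matrix (Fin 3) (Fin 3) ℂ) + W3 ψ * NVmat ψ = Kmat ψ := by
  set Q : ℂ := (Fintype.card F : ℂ) with hQdef
  have hQ : Q ≠ 0 := card_ne_zero_C
  have hψ0 : ψ⁻¹ (0 : F) = 0 := MulChar.map_zero _
  have hψ1 : ψ⁻¹ (1 : F) = 1 := MulChar.map_one _
  have hψm1 : ψ⁻¹ (-1 : F) = ψ (-1) := by
    rw [MulChar.inv_apply', inv_neg, inv_one]
  have hsum_inv0 : ∑ y : F, ψ⁻¹ y = 0 := MulChar.sum_eq_zero_of_ne_one (mc_inv_ne_one ψ hψ)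
  have hsum0 : ∑ y : F, ψ y = 0 := MulChar.sum_eq_zero_of_ne_one hψ
  have hsum_inv1 : ∑ y : F, ψ⁻¹ (y - 1) = 0 := sum_shift ψ⁻¹ (mc_inv_ne_one ψ hψ) 1
  have hsum1 : ∑ y : F, ψ (y - 1) = 0 := sum_shift ψ hψ 1
  have hjac01 : ∑ y : F, ψ y * ψ⁻¹ (y - 1) = -1 := by
    have := sum_jac2 ψ hψ 0 1
    simp only [sub_zero] at this
    rw [this, if_neg (zero_ne_one (α := F))]
  have hjac10 : ∑ y : F, ψ (y - 1) * ψ⁻¹ y = -1 := by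
    have := sum_jac2 ψ hψ 1 0
    simp only [sub_zero] at this
    rw [this, if_neg (one_ne_zero (α := F))]
  have hjac11 : ∑ y : F, ψ (y - 1) * ψ⁻¹ (y - 1) = Q - 1 := by
    rw [sum_jac2 ψ hψ 1 1, if_pos rfl]
  have hself : ∑ y : F, ψ y * ψ⁻¹ y = Q - 1 := sum_self ψ hψ
  -- entry sums
  have S00 : ∑ y : F, ((if y = 0 then 1 else 0) - ψ y) * (Q⁻¹ * (1 + ψ⁻¹ y))
      = Q⁻¹ * (2 - Q) := by
    have h : ∀ y : F, ((if y = 0 then 1 else 0) - ψ y) * (Q⁻¹ * (1 + ψ⁻¹ y))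
        = Q⁻¹ * (if y = 0 then 1 + ψ⁻¹ y else 0) - Q⁻¹ * ψ y - Q⁻¹ * (ψ y * ψ⁻¹ y) := by
      intro y; split_ifs <;> ring
    rw [Finset.sum_congr rfl (fun y _ => h y)]
    simp only [Finset.sum_sub_distrib, ← Finset.mul_sum]
    rw [Finset.sum_ite_eq' univ (0:F) (fun y => 1 + ψ⁻¹ y), hsum0, hself]
    simp only [mem_univ, if_true, hψ0, add_zero, mul_zero]
    ring
  have S01 : ∑ y : F, ((if y = 0 then 1 else 0) - ψ y) * (Q⁻¹ * (1 + ψ⁻¹ (y - 1)))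
      = Q⁻¹ * (2 + ψ (-1)) := by
    have h : ∀ y : F, ((if y = 0 then 1 else 0) - ψ y) * (Q⁻¹ * (1 + ψ⁻¹ (y - 1)))
        = Q⁻¹ * (if y = 0 then 1 + ψ⁻¹ (y - 1) else 0) - Q⁻¹ * ψ y
          - Q⁻¹ * (ψ y * ψ⁻¹ (y - 1)) := by
      intro y; split_ifs <;> ring
    rw [Finset.sum_congr rfl (fun y _ => h y)]
    simp only [Finset.sum_sub_distrib, ← Finset.mul_sum]
    rw [Finset.sum_ite_eq' univ (0:F) (fun y => 1 + ψ⁻¹ (y - 1)), hsum0, hjac01]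
    simp only [mem_univ, if_true, zero_sub, hψm1, mul_zero]
    ring
  have S02 : ∑ y : F, ((if y = 0 then 1 else 0) - ψ y) * 1 = 1 := by
    simp only [mul_one, Finset.sum_sub_distrib]
    rw [Finset.sum_ite_eq' univ (0:F) (fun _ => (1:ℂ)), hsum0]
    simp
  have S10 : ∑ y : F, ((if y = 1 then 1 else 0) - ψ (y - 1)) * (Q⁻¹ * (1 + ψ⁻¹ y))
      = Q⁻¹ * 3 := by
    have h : ∀ y : F, ((if y = 1 then 1 else 0) - ψ (y - 1)) * (Q⁻¹ * (1 + ψ⁻¹ y))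
        = Q⁻¹ * (if y = 1 then 1 + ψ⁻¹ y else 0) - Q⁻¹ * ψ (y - 1)
          - Q⁻¹ * (ψ (y - 1) * ψ⁻¹ y) := by
      intro y; split_ifs <;> ring
    rw [Finset.sum_congr rfl (fun y _ => h y)]
    simp only [Finset.sum_sub_distrib, ← Finset.mul_sum]
    rw [Finset.sum_ite_eq' univ (1:F) (fun y => 1 + ψ⁻¹ y), hsum1, hjac10]
    simp only [mem_univ, if_true, hψ1, mul_zero]
    ring
  have S11 : ∑ y : F, ((if y = 1 then 1 else 0) - ψ (y - 1)) * (Q⁻¹ * (1 + ψ⁻¹ (y - 1)))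
      = Q⁻¹ * (2 - Q) := by
    have h : ∀ y : F, ((if y = 1 then 1 else 0) - ψ (y - 1)) * (Q⁻¹ * (1 + ψ⁻¹ (y - 1)))
        = Q⁻¹ * (if y = 1 then 1 + ψ⁻¹ (y - 1) else 0) - Q⁻¹ * ψ (y - 1)
          - Q⁻¹ * (ψ (y - 1) * ψ⁻¹ (y - 1)) := by
      intro y; split_ifs <;> ring
    rw [Finset.sum_congr rfl (fun y _ => h y)]
    simp only [Finset.sum_sub_distrib, ← Finset.mul_sum]
    rw [Finset.sum_ite_eq' univ (1:F) (fun y => 1 + ψ⁻¹ (y - 1)), hsum1, hjac11]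
    simp only [mem_univ, if_true, sub_self, hψ0, add_zero, mul_zero]
    ring
  have S12 : ∑ y : F, ((if y = 1 then 1 else 0) - ψ (y - 1)) * 1 = 1 := by
    simp only [mul_one, Finset.sum_sub_distrib]
    rw [Finset.sum_ite_eq' univ (1:F) (fun _ => (1:ℂ)), hsum1]
    simp
  have hcard : ∑ _y : F, (1:ℂ) = Q := by
    rw [Finset.sum_const, card_univ]; simp [hQdef]
  have S20 : ∑ y : F, (-Q⁻¹) * (Q⁻¹ * (1 + ψ⁻¹ y)) = -Q⁻¹ := by
    have h : ∀ y : F, (-Q⁻¹) * (Q⁻¹ * (1 + ψ⁻¹ y))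
        = (-Q⁻¹ * Q⁻¹) * 1 + (-Q⁻¹ * Q⁻¹) * ψ⁻¹ y := by intro y; ring
    rw [Finset.sum_congr rfl (fun y _ => h y)]
    simp only [Finset.sum_add_distrib, ← Finset.mul_sum]
    rw [hcard, hsum_inv0]
    field_simp
    ring
  have S21 : ∑ y : F, (-Q⁻¹) * (Q⁻¹ * (1 + ψ⁻¹ (y - 1))) = -Q⁻¹ := by
    have h : ∀ y : F, (-Q⁻¹) * (Q⁻¹ * (1 + ψ⁻¹ (y - 1)))
        = (-Q⁻¹ * Q⁻¹) * 1 + (-Q⁻¹ * Q⁻¹) * ψ⁻¹ (y - 1) := by intro y; ring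
    rw [Finset.sum_congr rfl (fun y _ => h y)]
    simp only [Finset.sum_add_distrib, ← Finset.mul_sum]
    rw [hcard, hsum_inv1]
    field_simp
    ring
  have S22 : ∑ _y : F, (-Q⁻¹) * (1:ℂ) = -1 := by
    simp only [mul_one, Finset.sum_const, card_univ, nsmul_eq_mul]
    rw [show ((Fintype.card F : ℂ)) = Q from rfl] at *
    field_simp
  have E00 : ((1 : Matrix (Fin 3) (Fin 3) ℂ) + W3 ψ * NVmat ψ) 0 0 = Kmat ψ 0 0 := by
    rw [Matrix.add_apply, Matrix.one_apply_eq, Matrix.mul_apply]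
    simp only [W3, NVmat, Kmat, Matrix.of_apply, Matrix.cons_val_zero, Matrix.cons_val_one,
      Matrix.head_cons, Matrix.cons_val_two, Matrix.tail_cons, ← hQdef]
    rw [S00]
    linear_combination -inv_mul_cancel₀ hQ
  have E01 : ((1 : Matrix (Fin 3) (Fin 3) ℂ) + W3 ψ * NVmat ψ) 0 1 = Kmat ψ 0 1 := by
    rw [Matrix.add_apply, Matrix.one_apply_ne (by decide), Matrix.mul_apply]
    simp only [W3, NVmat, Kmat, Matrix.of_apply, Matrix.cons_val_zero, Matrix.cons_val_one,
      Matrix.head_cons, Matrix.cons_val_two, Matrix.tail_cons, ← hQdef]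
    rw [S01]; ring
  have E02 : ((1 : Matrix (Fin 3) (Fin 3) ℂ) + W3 ψ * NVmat ψ) 0 2 = Kmat ψ 0 2 := by
    rw [Matrix.add_apply, Matrix.one_apply_ne (by decide), Matrix.mul_apply]
    simp only [W3, NVmat, Kmat, Matrix.of_apply, Matrix.cons_val_zero, Matrix.cons_val_one,
      Matrix.head_cons, Matrix.cons_val_two, Matrix.tail_cons, ← hQdef]
    rw [S02]; ring
  have E10 : ((1 : Matrix (Fin 3) (Fin 3) ℂ) + W3 ψ * NVmat ψ) 1 0 = Kmat ψ 1 0 := by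
    rw [Matrix.add_apply, Matrix.one_apply_ne (by decide), Matrix.mul_apply]
    simp only [W3, NVmat, Kmat, Matrix.of_apply, Matrix.cons_val_zero, Matrix.cons_val_one,
      Matrix.head_cons, Matrix.cons_val_two, Matrix.tail_cons, ← hQdef]
    rw [S10]; ring
  have E11 : ((1 : Matrix (Fin 3) (Fin 3) ℂ) + W3 ψ * NVmat ψ) 1 1 = Kmat ψ 1 1 := by
    rw [Matrix.add_apply, Matrix.one_apply_eq, Matrix.mul_apply]
    simp only [W3, NVmat, Kmat, Matrix.of_apply, Matrix.cons_val_zero, Matrix.cons_val_one,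
      Matrix.head_cons, Matrix.cons_val_two, Matrix.tail_cons, ← hQdef]
    rw [S11]
    linear_combination -inv_mul_cancel₀ hQ
  have E12 : ((1 : Matrix (Fin 3) (Fin 3) ℂ) + W3 ψ * NVmat ψ) 1 2 = Kmat ψ 1 2 := by
    rw [Matrix.add_apply, Matrix.one_apply_ne (by decide), Matrix.mul_apply]
    simp only [W3, NVmat, Kmat, Matrix.of_apply, Matrix.cons_val_zero, Matrix.cons_val_one,
      Matrix.head_cons, Matrix.cons_val_two, Matrix.tail_cons, ← hQdef]
    rw [S12]; ring
  have E20 : ((1 : Matrix (Fin 3) (Fin 3) ℂ) + W3 ψ * NVmat ψ) 2 0 = Kmat ψ 2 0 := by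
    rw [Matrix.add_apply, Matrix.one_apply_ne (by decide), Matrix.mul_apply]
    simp only [W3, NVmat, Kmat, Matrix.of_apply, Matrix.cons_val_zero, Matrix.cons_val_one,
      Matrix.head_cons, Matrix.cons_val_two, Matrix.tail_cons, ← hQdef]
    rw [S20]; ring
  have E21 : ((1 : Matrix (Fin 3) (Fin 3) ℂ) + W3 ψ * NVmat ψ) 2 1 = Kmat ψ 2 1 := by
    rw [Matrix.add_apply, Matrix.one_apply_ne (by decide), Matrix.mul_apply]
    simp only [W3, NVmat, Kmat, Matrix.of_apply, Matrix.cons_val_zero, Matrix.cons_val_one,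
      Matrix.head_cons, Matrix.cons_val_two, Matrix.tail_cons, ← hQdef]
    rw [S21]; ring
  have E22 : ((1 : Matrix (Fin 3) (Fin 3) ℂ) + W3 ψ * NVmat ψ) 2 2 = Kmat ψ 2 2 := by
    rw [Matrix.add_apply, Matrix.one_apply_eq, Matrix.mul_apply]
    simp only [W3, NVmat, Kmat, Matrix.of_apply, Matrix.cons_val_zero, Matrix.cons_val_one,
      Matrix.head_cons, Matrix.cons_val_two, Matrix.tail_cons, ← hQdef]
    rw [S22]; ring
  ext i j
  fin_cases i <;> fin_cases j
  · exact E00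
  · exact E01
  · exact E02
  · exact E10
  · exact E11
  · exact E12
  · exact E20
  · exact E21
  · exact E22

lemma K_det (ψ : MulChar F ℂ) :
    (Kmat ψ : Matrix (Fin 3) (Fin 3) ℂ).det
      = -(1 + ψ (-1)) * ((Fintype.card F : ℂ)⁻¹ * (Fintype.card F : ℂ)⁻¹) := by
  rw [Matrix.det_fin_three]
  simp only [Kmat, Matrix.of_apply, Matrix.cons_val_zero, Matrix.cons_val_one,
    Matrix.head_cons, Matrix.cons_val_two, Matrix.tail_cons]
  ring

noncomputable def Vmat (e : AddChar F ℂ) : Matrix F F ℂ := Matrix.of fun x t => e (x * t)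

noncomputable def Dmat (ψ : MulChar F ℂ) (e : AddChar F ℂ) : Matrix F F ℂ :=
  Matrix.diagonal fun t => if t = 0 then 1 else ∑ z, ψ z * e (z * t)

lemma Vmat_det_ne_zero (e : AddChar F ℂ) (he : e.IsPrimitive) : (Vmat e).det ≠ 0 := by
  have hmul : Vmat e * Matrix.of (fun t y : F => e (-(t * y)))
      = ((Fintype.card F : ℂ) • (1 : Matrix F F ℂ)) := by
    ext x y
    rw [Matrix.mul_apply]
    have h : ∀ t : F, (Vmat e) x t * (Matrix.of (fun t y : F => e (-(t * y)))) t y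
        = e (t * (x - y)) := by
      intro t
      simp only [Vmat, Matrix.of_apply, ← AddChar.map_add_eq_mul]
      congr 1
      ring
    rw [Finset.sum_congr rfl (fun t _ => h t), AddChar.sum_mulShift _ he,
      Matrix.smul_apply, Matrix.one_apply, smul_eq_mul]
    by_cases hxy : x = y
    · rw [if_pos (sub_eq_zero.mpr hxy), if_pos hxy, mul_one]
    · rw [if_neg (fun hh => hxy (sub_eq_zero.mp hh)), if_neg hxy, mul_zero]
      exact Nat.cast_zero
  intro h0
  have hdet := congrArg Matrix.det hmul
  rw [Matrix.det_mul, h0, zero_mul, Matrix.det_smul, Matrix.det_one, mul_one] at hdet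
  exact pow_ne_zero _ (card_ne_zero_C (F := F)) hdet.symm

lemma ApV (ψ : MulChar F ℂ) (hψ : ψ ≠ 1) (e : AddChar F ℂ) (he : e.IsPrimitive) :
    Ap ψ * Vmat e = Vmat e * Dmat ψ e := by
  ext x t
  rw [Matrix.mul_apply, Dmat, Matrix.mul_diagonal]
  have h : ∀ y : F, (Ap ψ) x y * (Vmat e) y t
      = ψ (y - x) * e (y * t) + (Fintype.card F : ℂ)⁻¹ * e (y * t) := by
    intro y; simp only [Ap, Vmat, Matrix.of_apply]; ring
  rw [Finset.sum_congr rfl (fun y _ => h y), Finset.sum_add_distrib, ← Finset.mul_sum]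
  have hshift : ∑ y : F, ψ (y - x) * e (y * t) = (∑ u : F, ψ u * e (u * t)) * e (x * t) := by
    rw [← Fintype.sum_equiv (Equiv.addRight x) (fun u => ψ u * e ((u + x) * t))
      (fun y => ψ (y - x) * e (y * t)) (fun u => by
        simp only [Equiv.coe_addRight, add_sub_cancel_right])]
    rw [Finset.sum_mul]
    apply Finset.sum_congr rfl
    intro u _
    rw [show (u + x) * t = u * t + x * t by ring, AddChar.map_add_eq_mul]
    ring
  rw [hshift, AddChar.sum_mulShift t he]
  by_cases ht : t = 0
  · subst ht
    rw [if_pos rfl, if_pos rfl]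
    simp only [mul_zero, AddChar.map_zero_eq_one, mul_one]
    rw [inv_mul_cancel₀ (card_ne_zero_C (F := F)), MulChar.sum_eq_zero_of_ne_one hψ, zero_add]
    simp [Vmat, AddChar.map_zero_eq_one]
  · rw [if_neg ht, if_neg ht, Nat.cast_zero, mul_zero, add_zero]
    simp only [Vmat, Matrix.of_apply]
    ring

lemma det_Ap (ψ : MulChar F ℂ) (hψ : ψ ≠ 1) (e : AddChar F ℂ) (he : e.IsPrimitive) :
    (Ap ψ).det = ψ (-1) * gaussSum ψ e ^ (Fintype.card F - 1) := by
  have hdet := congrArg Matrix.det (ApV ψ hψ e he)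
  rw [Matrix.det_mul, Matrix.det_mul, mul_comm ((Vmat e).det)] at hdet
  have hAp : (Ap ψ).det = (Dmat ψ e).det :=
    mul_right_cancel₀ (Vmat_det_ne_zero e he) hdet
  rw [hAp, Dmat, Matrix.det_diagonal]
  -- split off t = 0
  rw [← Finset.mul_prod_erase univ _ (mem_univ (0:F)), if_pos rfl, one_mul]
  have hprod : ∀ t ∈ univ.erase (0:F),
      (if t = 0 then (1:ℂ) else ∑ z, ψ z * e (z * t)) = gaussSum ψ (e.mulShift t) := by
    intro t ht
    rw [if_neg (Finset.mem_erase.mp ht).1]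
    rw [gaussSum]
    apply Finset.sum_congr rfl
    intro z _
    rw [AddChar.mulShift_apply, mul_comm z t]
  rw [Finset.prod_congr rfl hprod]
  -- now relate to gaussSum ψ e
  have hkey : ∀ t ∈ univ.erase (0:F), ψ t * gaussSum ψ (e.mulShift t) = gaussSum ψ e := by
    intro t ht
    have ht0 : t ≠ 0 := (Finset.mem_erase.mp ht).1
    have := gaussSum_mulShift ψ e (Units.mk0 t ht0)
    simpa using this
  have hsq : ψ (-1) * ψ (-1) = 1 := by
    rw [← map_mul]; norm_num
  have hcardE : (univ.erase (0:F)).card = Fintype.card F - 1 := by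
    rw [Finset.card_erase_of_mem (mem_univ _), Finset.card_univ]
  have hPP : (∏ t ∈ univ.erase (0:F), ψ t) * (∏ t ∈ univ.erase (0:F), gaussSum ψ (e.mulShift t))
      = gaussSum ψ e ^ (Fintype.card F - 1) := by
    rw [← Finset.prod_mul_distrib, Finset.prod_congr rfl hkey, Finset.prod_const, hcardE]
  have hprod_units : (∏ t ∈ univ.erase (0:F), t) = (-1 : F) := by
    have h1 : (∏ u : Fˣ, u) = (-1 : Fˣ) := FiniteField.prod_univ_units_id_eq_neg_one
    have h2 : (∏ t ∈ univ.erase (0:F), t) = ∏ u : Fˣ, (u : F) := by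
      apply Finset.prod_nbij' (fun t => if h : t = 0 then 1 else Units.mk0 t h)
        (fun u => (u : F))
      · intro a ha; exact mem_univ _
      · intro u _
        exact Finset.mem_erase.mpr ⟨Units.ne_zero u, mem_univ _⟩
      · intro a ha
        have h0 : a ≠ 0 := (Finset.mem_erase.mp ha).1
        simp [h0]
      · intro u _
        have h0 : (u : F) ≠ 0 := Units.ne_zero u
        simp only [h0, dif_neg]
        exact Units.ext rfl
      · intro a ha
        have h0 : a ≠ 0 := (Finset.mem_erase.mp ha).1
        simp [h0]
    rw [h2, ← Units.coe_prod, h1]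
    simp
  have hpsiprod : (∏ t ∈ univ.erase (0:F), ψ t) = ψ (-1) := by
    rw [← map_prod, hprod_units]
  calc (∏ t ∈ univ.erase (0:F), gaussSum ψ (e.mulShift t))
      = (ψ (-1) * ψ (-1)) * (∏ t ∈ univ.erase (0:F), gaussSum ψ (e.mulShift t)) := by
        rw [hsq, one_mul]
    _ = ψ (-1) * ((∏ t ∈ univ.erase (0:F), ψ t)
          * (∏ t ∈ univ.erase (0:F), gaussSum ψ (e.mulShift t))) := by rw [hpsiprod]; ring
    _ = ψ (-1) * gaussSum ψ e ^ (Fintype.card F - 1) := by rw [hPP]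

lemma det_reduce (ψ : MulChar F ℂ) :
    (Matrix.of fun a b : {u : Fˣ // u ≠ 1} => ψ (((b : Fˣ) : F) - ((a : Fˣ) : F))).det
      = (Bmat ψ).det := by
  classical
  let g0 : {u : Fˣ // u ≠ 1} ⊕ Fin 2 → F :=
    Sum.elim (fun u => ((u : Fˣ) : F)) (fun i => if i = 0 then 0 else 1)
  have val_ne_zero : ∀ a : {u : Fˣ // u ≠ 1}, ((a : Fˣ) : F) ≠ 0 := fun a => Units.ne_zero _
  have val_ne_one : ∀ a : {u : Fˣ // u ≠ 1}, ((a : Fˣ) : F) ≠ 1 := by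
    intro a h
    exact a.2 (Units.ext (by rw [h, Units.val_one]))
  have hinj : Function.Injective g0 := by
    rintro (a | i) (b | j) h
    · simp only [g0, Sum.elim_inl] at h
      exact congrArg Sum.inl (Subtype.ext (Units.ext h))
    · exfalso
      simp only [g0, Sum.elim_inl, Sum.elim_inr] at h
      by_cases hj : j = 0
      · rw [if_pos hj] at h; exact val_ne_zero a h
      · rw [if_neg hj] at h; exact val_ne_one a h
    · exfalso
      simp only [g0, Sum.elim_inl, Sum.elim_inr] at h
      by_cases hi : i = 0
      · rw [if_pos hi] at h; exact val_ne_zero b h.symm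
      · rw [if_neg hi] at h; exact val_ne_one b h.symm
    · simp only [g0, Sum.elim_inr] at h
      congr 1
      by_cases hi : i = 0 <;> by_cases hj : j = 0
      · rw [hi, hj]
      · rw [if_pos hi, if_neg hj] at h; exact absurd h.symm one_ne_zero
      · rw [if_neg hi, if_pos hj] at h; exact absurd h one_ne_zero
      · omega
  have hcard2 : Fintype.card {u : Fˣ // u ≠ 1} = Fintype.card F - 2 := by
    have h1 : Fintype.card {u : Fˣ // u = 1} = 1 := Fintype.card_subtype_eq (1 : Fˣ)
    have h2 : Fintype.card {u : Fˣ // u ≠ 1} = Fintype.card Fˣ - 1 := by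
      rw [← h1]
      exact Fintype.card_subtype_compl _
    rw [h2, Fintype.card_units]
    have h3 : 2 ≤ Fintype.card F := Fintype.one_lt_card
    omega
  have hcard : Fintype.card ({u : Fˣ // u ≠ 1} ⊕ Fin 2) = Fintype.card F := by
    rw [Fintype.card_sum, Fintype.card_fin, hcard2]
    have h3 : 2 ≤ Fintype.card F := Fintype.one_lt_card
    omega
  have hbij : Function.Bijective g0 :=
    (Fintype.bijective_iff_injective_and_card g0).mpr ⟨hinj, hcard⟩
  let g : ({u : Fˣ // u ≠ 1} ⊕ Fin 2) ≃ F := Equiv.ofBijective g0 hbij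
  rw [← Matrix.det_submatrix_equiv_self g (Bmat ψ)]
  have hsub : (Bmat ψ).submatrix g g
      = Matrix.fromBlocks (Matrix.of fun a b : {u : Fˣ // u ≠ 1} => ψ (((b : Fˣ) : F) - ((a : Fˣ) : F)))
        (Matrix.of fun (a : {u : Fˣ // u ≠ 1}) (j : Fin 2) => (Bmat ψ) (g (Sum.inl a)) (g (Sum.inr j)))
        0 (1 : Matrix (Fin 2) (Fin 2) ℂ) := by
    ext ab cd
    rcases ab with a | i <;> rcases cd with b | j
    · simp only [Matrix.submatrix_apply, Matrix.fromBlocks_apply₁₁, Matrix.of_apply]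
      show Bmat ψ ((a : Fˣ) : F) ((b : Fˣ) : F) = _
      simp only [Bmat, Matrix.of_apply]
      rw [if_neg (val_ne_zero a), if_neg (val_ne_one a)]
    · rfl
    · simp only [Matrix.submatrix_apply, Matrix.fromBlocks_apply₂₁, Matrix.zero_apply]
      show Bmat ψ (g0 (Sum.inr i)) ((b : Fˣ) : F) = 0
      fin_cases i
      · show Bmat ψ (if (0 : Fin 2) = 0 then (0:F) else 1) _ = 0
        rw [if_pos rfl]
        simp [Bmat, val_ne_zero b]
      · show Bmat ψ (if (1 : Fin 2) = 0 then (0:F) else 1) _ = 0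
        rw [if_neg (by decide)]
        simp [Bmat, val_ne_one b, (one_ne_zero (α := F))]
    · simp only [Matrix.submatrix_apply, Matrix.fromBlocks_apply₂₂]
      show Bmat ψ (g0 (Sum.inr i)) (g0 (Sum.inr j)) = _
      fin_cases i <;> fin_cases j <;>
        simp [Bmat, g0, Matrix.one_apply, (one_ne_zero (α := F)), (zero_ne_one (α := F))]
  rw [hsub, Matrix.det_fromBlocks_zero₂₁, Matrix.det_one, mul_one]

lemma main_formula (ψ : MulChar F ℂ) (hψ : ψ ≠ 1) (e : AddChar F ℂ) (he : e.IsPrimitive) :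
    (Matrix.of fun a b : {u : Fˣ // u ≠ 1} => ψ (((b : Fˣ) : F) - ((a : Fˣ) : F))).det
      = -((1 + ψ (-1)) / (Fintype.card F : ℂ) ^ 2) * gaussSum ψ e ^ (Fintype.card F - 1) := by
  have hQ : (Fintype.card F : ℂ) ≠ 0 := card_ne_zero_C
  rw [det_reduce]
  have hfact : Bmat ψ = Ap ψ * (1 + Nmat ψ * (V3 * W3 ψ)) := by
    rw [Matrix.mul_add, Matrix.mul_one, ← Matrix.mul_assoc, ApN ψ hψ, Matrix.one_mul]
    exact B_eq ψ
  rw [hfact, Matrix.det_mul, ← Matrix.mul_assoc (Nmat ψ) V3 (W3 ψ),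
    Matrix.det_one_add_mul_comm]
  erw [NV3 ψ hψ]
  rw [K_eq ψ hψ, K_det ψ, det_Ap ψ hψ e he]
  have hs : ψ (-1) * ψ (-1) = 1 := by
    rw [← map_mul, neg_mul_neg, one_mul, ψ.map_one]
  linear_combination (-(gaussSum ψ e ^ (Fintype.card F - 1))
    * (Fintype.card F : ℂ)⁻¹ * (Fintype.card F : ℂ)⁻¹) * hs

end DetDqAux

theorem det_D_q_minus (F : Type*) [Field F] [Fintype F] [DecidableEq F]
    (hodd : Odd (Fintype.card F)) (h3 : 3 ≤ Fintype.card F)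
    (ψ : MulChar F ℂ) (hψ : ψ ≠ 1) (e : AddChar F ℂ) (he : e.IsPrimitive)
    (φ : MulChar F ℂ) (hφ2 : φ ^ 2 = 1) (hφ1 : φ ≠ 1) :
    (Matrix.of fun a b : {u : Fˣ // u ≠ 1} => ψ (((b : Fˣ) : F) - ((a : Fˣ) : F))).det =
        -((1 + ψ (-1)) / (Fintype.card F : ℂ) ^ 2) * gaussSum ψ e ^ (Fintype.card F - 1) ∧
      ((Matrix.of fun a b : {u : Fˣ // u ≠ 1} => φ (((b : Fˣ) : F) - ((a : Fˣ) : F))).det = 0 ↔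
        Fintype.card F % 4 = 3) ∧
      (Fintype.card F % 4 = 1 →
        (Matrix.of fun a b : {u : Fˣ // u ≠ 1} => φ (((b : Fˣ) : F) - ((a : Fˣ) : F))).det =
          -2 * (Fintype.card F : ℂ) ^ ((Fintype.card F - 5) / 2)) := by
  classical
  set q := Fintype.card F with hqdef
  have hQ : (q : ℂ) ≠ 0 := DetDqAux.card_ne_zero_C
  have hmainψ := DetDqAux.main_formula ψ hψ e he
  have hmainφ := DetDqAux.main_formula φ hφ1 e he
  -- the value of φ at units is ±1
  have hval : ∀ u : Fˣ, φ (u : F) = 1 ∨ φ (u : F) = -1 := by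
    intro u
    have h := congrArg (fun χ : MulChar F ℂ => χ (u : F)) hφ2
    simp only [MulChar.pow_apply_coe, MulChar.one_apply_coe] at h
    rw [pow_two] at h
    exact mul_self_eq_one_iff.mp h
  -- generator of the unit group
  obtain ⟨g, hg⟩ := IsCyclic.exists_generator (α := Fˣ)
  have horder : orderOf g = q - 1 := by
    rw [orderOf_eq_card_of_forall_mem_zpowers hg, Nat.card_eq_fintype_card, Fintype.card_units]
  have hgen : φ (g : F) = -1 := by
    rcases hval g with h1 | h1
    · exfalso
      apply hφ1
      apply MulChar.ext
      intro u
      obtain ⟨k, hk⟩ := mem_powers_iff_mem_zpowers.mpr (hg u)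
      rw [MulChar.one_apply_coe, ← hk, Units.val_pow_eq_pow_val, map_pow, h1, one_pow]
    · exact h1
  have hq2 : q % 2 = 1 := Nat.odd_iff.mp hodd
  set m := (q - 1) / 2 with hmdef
  have hm1 : (-1 : Fˣ) = g ^ m := by
    have hsq : (g ^ m) ^ 2 = 1 := by
      rw [← pow_mul, show m * 2 = q - 1 by omega, ← horder, pow_orderOf_eq_one]
    have hne1 : g ^ m ≠ 1 := by
      intro h
      have hdvd := orderOf_dvd_of_pow_eq_one h
      rw [horder] at hdvd
      have hle : q - 1 ≤ m := Nat.le_of_dvd (by omega) hdvd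
      omega
    have h2 : ((g ^ m : Fˣ) : F) * ((g ^ m : Fˣ) : F) = 1 := by
      rw [← Units.val_mul, ← pow_two, hsq, Units.val_one]
    rcases mul_self_eq_one_iff.mp h2 with h | h
    · exact absurd (Units.ext (by rw [h, Units.val_one])) hne1
    · exact Units.ext (by rw [Units.coe_neg_one, h])
  have hφm1 : φ (-1 : F) = (-1 : ℂ) ^ m := by
    rw [show (-1 : F) = ((-1 : Fˣ) : F) from (Units.coe_neg_one).symm, hm1,
      Units.val_pow_eq_pow_val, map_pow, hgen]
  have hmod14 : q % 4 = 1 ∨ q % 4 = 3 := by omega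
  have hcase1 : q % 4 = 1 → φ (-1 : F) = 1 := by
    intro h4
    rw [hφm1]
    exact Even.neg_one_pow (by rw [Nat.even_iff]; omega)
  have hcase3 : q % 4 = 3 → φ (-1 : F) = -1 := by
    intro h4
    rw [hφm1]
    exact Odd.neg_one_pow (by rw [Nat.odd_iff]; omega)
  -- quadratic character facts
  have hquad : φ.IsQuadratic := by
    intro a
    by_cases ha : IsUnit a
    · rcases ha with ⟨u, rfl⟩
      right
      exact hval u
    · left
      exact φ.map_nonunit ha
  have hG2 : gaussSum φ e ^ 2 = φ (-1) * (q : ℂ) := gaussSum_sq hφ1 hquad he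
  -- the q ≡ 1 (mod 4) determinant value
  have h14 : q % 4 = 1 →
      (Matrix.of fun a b : {u : Fˣ // u ≠ 1} => φ (((b : Fˣ) : F) - ((a : Fˣ) : F))).det
        = -2 * (q : ℂ) ^ ((q - 5) / 2) := by
    intro h4
    have hc1 : φ (-1 : F) = 1 := hcase1 h4
    have hpow : gaussSum φ e ^ (q - 1) = ((q : ℂ)) ^ m := by
      rw [show q - 1 = 2 * m by omega, pow_mul, hG2, hc1, one_mul]
    rw [hmainφ, hc1, hpow]
    have hm2 : m = (q - 5) / 2 + 2 := by omega
    rw [hm2, pow_add]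
    field_simp
    ring
  refine ⟨hmainψ, ⟨?_, ?_⟩, h14⟩
  · intro h0
    rcases hmod14 with h4 | h4
    · exfalso
      rw [h14 h4] at h0
      have : ((q : ℂ)) ^ ((q - 5) / 2) ≠ 0 := pow_ne_zero _ hQ
      have h2 : (-2 : ℂ) ≠ 0 := by norm_num
      exact (mul_ne_zero h2 this) h0
    · exact h4
  · intro h4
    rw [hmainφ, hcase3 h4]
    norm_num
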